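/- If (U, V) is a bivariate Gaussian vector with means (μ_x, μ_o), variances (K_xx, K_oo) and covariance K_xo, with s² := K_xx + K_oo − 2K_xo > 0, then E[max(U, V)] = μ_x·Φ((μ_x−μ_o)/s) + μ_o·Φ((μ_o−μ_x)/s) + s·φ((μ_x−μ_o)/s). -/

import Mathlib

open MeasureTheory ProbabilityTheory Real

/-- Standard normal PDF. -/
noncomputable def stdPDF (x : ℝ) : ℝ := (Real.sqrt (2 * Real.pi))⁻¹ * Real.exp (-(x ^ 2) / 2)

/-- Standard normal CDF. -/
noncomputable def stdCDF (x : ℝ) : ℝ := ∫ t in Set.Iic x, stdPDF t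

open Set Filter Topology

lemma stdPDF_eq (x : ℝ) :
    stdPDF x = (Real.sqrt (2 * Real.pi))⁻¹ * Real.exp (-(2⁻¹ : ℝ) * x ^ 2) := by
  unfold stdPDF
  ring_nf

lemma stdPDF_nonneg (x : ℝ) : 0 ≤ stdPDF x := by
  unfold stdPDF
  positivity

lemma stdPDF_even (x : ℝ) : stdPDF (-x) = stdPDF x := by
  unfold stdPDF
  rw [neg_sq]

lemma integrable_stdPDF : Integrable stdPDF := by
  have h : Integrable (fun x : ℝ => Real.exp (-(2⁻¹ : ℝ) * x ^ 2)) :=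
    integrable_exp_neg_mul_sq (by norm_num)
  have := h.const_mul (Real.sqrt (2 * Real.pi))⁻¹
  refine this.congr ?_
  filter_upwards with x
  rw [stdPDF_eq]

lemma integrable_mul_stdPDF : Integrable (fun x : ℝ => x * stdPDF x) := by
  have h : Integrable (fun x : ℝ => x * Real.exp (-(2⁻¹ : ℝ) * x ^ 2)) :=
    integrable_mul_exp_neg_mul_sq (by norm_num)
  have := h.const_mul (Real.sqrt (2 * Real.pi))⁻¹
  refine this.congr ?_
  filter_upwards with x
  rw [stdPDF_eq]; ring

lemma integral_stdPDF : ∫ x : ℝ, stdPDF x = 1 := by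
  have h : (∫ x : ℝ, Real.exp (-(2⁻¹ : ℝ) * x ^ 2)) = Real.sqrt (Real.pi / 2⁻¹) :=
    integral_gaussian 2⁻¹
  have h2 : (∫ x : ℝ, stdPDF x) = (Real.sqrt (2 * Real.pi))⁻¹ * Real.sqrt (Real.pi / 2⁻¹) := by
    rw [← h, ← integral_const_mul]
    congr 1; funext x; rw [stdPDF_eq]
  rw [h2]
  have : Real.pi / 2⁻¹ = 2 * Real.pi := by ring
  rw [this, inv_mul_cancel₀]
  positivity

lemma hasDerivAt_neg_stdPDF (x : ℝ) :
    HasDerivAt (fun y : ℝ => -stdPDF y) (x * stdPDF x) x := by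
  have h1 : HasDerivAt (fun y : ℝ => -(y ^ 2) / 2) (-x) x := by
    have := (hasDerivAt_pow 2 x).neg.div_const 2
    refine this.congr_deriv ?_
    norm_num; ring
  have h2 : HasDerivAt (fun y : ℝ => Real.exp (-(y ^ 2) / 2)) (Real.exp (-(x ^ 2) / 2) * (-x)) x :=
    (Real.hasDerivAt_exp _).comp x h1
  have h3 := (h2.const_mul (Real.sqrt (2 * Real.pi))⁻¹).neg
  have hx : x * stdPDF x = -((Real.sqrt (2 * Real.pi))⁻¹ * (Real.exp (-(x ^ 2) / 2) * -x)) := by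
    unfold stdPDF; ring
  rw [hx]
  exact h3

lemma tendsto_stdPDF_atTop : Tendsto stdPDF atTop (𝓝 0) := by
  have h1 : Tendsto (fun x : ℝ => -(x ^ 2) / 2) atTop atBot := by
    apply Tendsto.atBot_div_const (by norm_num)
    exact tendsto_neg_atBot_iff.mpr (tendsto_pow_atTop (by norm_num))
  have h2 : Tendsto (fun x : ℝ => Real.exp (-(x ^ 2) / 2)) atTop (𝓝 0) :=
    Real.tendsto_exp_atBot.comp h1
  have h3 := h2.const_mul (Real.sqrt (2 * Real.pi))⁻¹
  rw [mul_zero] at h3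
  exact h3

lemma integral_mul_stdPDF_Ioi (a : ℝ) : ∫ x in Ioi a, x * stdPDF x = stdPDF a := by
  have := integral_Ioi_of_hasDerivAt_of_tendsto' (f := fun y => -stdPDF y)
    (f' := fun x => x * stdPDF x) (a := a) (m := 0)
    (fun x _ => hasDerivAt_neg_stdPDF x)
    integrable_mul_stdPDF.integrableOn
    (by simpa using tendsto_stdPDF_atTop.neg)
  simpa using this

lemma integral_stdPDF_Ioi (a : ℝ) : ∫ x in Ioi a, stdPDF x = 1 - stdCDF a := by
  have h := intervalIntegral.integral_Iic_add_Ioi (b := a) (μ := volume)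
    integrable_stdPDF.integrableOn integrable_stdPDF.integrableOn
  rw [integral_stdPDF] at h
  unfold stdCDF
  linarith

lemma integral_stdPDF_Ici (a : ℝ) : ∫ x in Ici a, stdPDF x = 1 - stdCDF a := by
  rw [integral_Ici_eq_integral_Ioi, integral_stdPDF_Ioi]

lemma integral_mul_stdPDF_Ici (a : ℝ) : ∫ x in Ici a, x * stdPDF x = stdPDF a := by
  rw [integral_Ici_eq_integral_Ioi, integral_mul_stdPDF_Ioi]

lemma stdCDF_neg (x : ℝ) : stdCDF (-x) = 1 - stdCDF x := by
  have h := integral_comp_neg_Iic (-x) stdPDF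
  have h2 : (∫ t in Iic (-x), stdPDF (-t)) = ∫ t in Iic (-x), stdPDF t := by
    apply setIntegral_congr_fun measurableSet_Iic
    intro t _
    exact stdPDF_even t
  rw [h2, neg_neg] at h
  show (∫ t in Iic (-x), stdPDF t) = 1 - stdCDF x
  rw [h, integral_stdPDF_Ioi]

lemma integral_mul_stdPDF : ∫ x : ℝ, x * stdPDF x = 0 := by
  have h1 : ∫ x in Ioi (0:ℝ), x * stdPDF x = stdPDF 0 := integral_mul_stdPDF_Ioi 0
  have h2 : ∫ x in Iic (0:ℝ), x * stdPDF x = -stdPDF 0 := by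
    have h := integral_comp_neg_Iic (0:ℝ) (fun t => t * stdPDF t)
    rw [neg_zero] at h
    have h3 : (∫ t in Iic (0:ℝ), -t * stdPDF (-t)) = ∫ t in Iic (0:ℝ), -(t * stdPDF t) := by
      apply setIntegral_congr_fun measurableSet_Iic
      intro t _
      dsimp only
      rw [stdPDF_even]; ring
    rw [h3, integral_neg] at h
    rw [h1] at h
    linarith
  have h := intervalIntegral.integral_Iic_add_Ioi (b := (0:ℝ)) (μ := volume)
    integrable_mul_stdPDF.integrableOn integrable_mul_stdPDF.integrableOn
  rw [h1, h2] at h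
  linarith


open scoped NNReal ENNReal

lemma gaussianPDFReal_eq_stdPDF (m : ℝ) {v : ℝ≥0} (hv : v ≠ 0) (x : ℝ) :
    gaussianPDFReal m v x = (Real.sqrt v)⁻¹ * stdPDF ((x - m) / Real.sqrt v) := by
  have hv' : (0:ℝ) < v := by exact_mod_cast (zero_lt_iff.mpr hv : (0:ℝ≥0) < v)
  have hsq : ((x - m) / Real.sqrt v) ^ 2 = (x - m) ^ 2 / v := by
    rw [div_pow, Real.sq_sqrt hv'.le]
  unfold gaussianPDFReal stdPDF
  rw [hsq, show (2 * π * (v:ℝ)) = (2 * π) * v by ring,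
    Real.sqrt_mul (by positivity) (v:ℝ), mul_inv]
  rw [show -((x - m) ^ 2 / (v:ℝ)) / 2 = -(x - m) ^ 2 / (2 * v) by ring]
  ring

lemma integral_gaussianReal_transfer (m : ℝ) {v : ℝ≥0} (hv : v ≠ 0) (f : ℝ → ℝ) :
    ∫ x, f x ∂(gaussianReal m v)
      = ∫ x, stdPDF x * f (Real.sqrt v * x + m) := by
  have hv' : (0:ℝ) < (v:ℝ) := by exact_mod_cast (zero_lt_iff.mpr hv : (0:ℝ≥0) < v)
  set s : ℝ := Real.sqrt v with hs_def
  have hs : 0 < s := Real.sqrt_pos.mpr hv'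
  rw [gaussianReal_of_var_ne_zero m hv]
  have hpm : AEMeasurable (fun x => Real.toNNReal (gaussianPDFReal m v x)) volume :=
    (measurable_real_toNNReal.comp (measurable_gaussianPDFReal m v)).aemeasurable
  have hd : gaussianPDF m v
      = fun x => ((Real.toNNReal (gaussianPDFReal m v x) : ℝ≥0) : ENNReal) := rfl
  rw [hd, integral_withDensity_eq_integral_smul₀ hpm f]
  have h1 : (fun x => (Real.toNNReal (gaussianPDFReal m v x) : ℝ≥0) • f x)
      = fun x => s⁻¹ * stdPDF ((x - m) / s) * f x := by
    funext x
    rw [NNReal.smul_def, smul_eq_mul, Real.coe_toNNReal _ (gaussianPDFReal_nonneg m v x),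
      gaussianPDFReal_eq_stdPDF m hv x]
  rw [h1]
  have h2 := integral_add_right_eq_self (μ := volume)
    (fun x => s⁻¹ * stdPDF ((x - m) / s) * f x) m
  rw [← h2]
  simp only [add_sub_cancel_right]
  simp only [div_eq_inv_mul]
  have h3 := Measure.integral_comp_mul_left
    (fun y => s⁻¹ * stdPDF y * f (s * y + m)) s⁻¹
  have hxx : ∀ x : ℝ, s * (s⁻¹ * x) = x := fun x => by field_simp
  simp only [hxx] at h3
  rw [h3, inv_inv, abs_of_pos hs, smul_eq_mul]
  simp only [mul_assoc, integral_const_mul]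
  rw [← mul_assoc, mul_inv_cancel₀ hs.ne', one_mul]

lemma integrable_gaussianPDFReal_mul_id (m : ℝ) (v : ℝ≥0) :
    Integrable (fun x => gaussianPDFReal m v x * x) := by
  by_cases hv : v = 0
  · subst hv
    simp only [gaussianPDFReal_zero_var, Pi.zero_apply, zero_mul]
    exact integrable_zero _ _ _
  · have hv' : (0:ℝ) < v := by exact_mod_cast (zero_lt_iff.mpr hv : (0:ℝ≥0) < v)
    have k1 : Integrable (fun y : ℝ => y * Real.exp (-(2 * (v:ℝ))⁻¹ * y ^ 2)) :=
      integrable_mul_exp_neg_mul_sq (by positivity)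
    have k1' : Integrable (fun y : ℝ => gaussianPDFReal 0 v y * y) := by
      have h := k1.const_mul (Real.sqrt (2 * π * (v:ℝ)))⁻¹
      refine h.congr ?_
      filter_upwards with y
      unfold gaussianPDFReal
      rw [sub_zero, show -(y ^ 2) / (2 * (v:ℝ)) = -(2 * (v:ℝ))⁻¹ * y ^ 2 by ring]
      ring
    have k2 : Integrable (fun y : ℝ => gaussianPDFReal 0 v y * (y + m)) := by
      have h := k1'.add ((integrable_gaussianPDFReal 0 v).mul_const m)
      refine h.congr ?_
      filter_upwards with y
      simp only [Pi.add_apply]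
      ring
    have h := k2.comp_sub_right m
    refine h.congr ?_
    filter_upwards with x
    rw [sub_add_cancel, gaussianPDFReal_sub, zero_add]

lemma integrable_id_gaussianReal (m : ℝ) (v : ℝ≥0) :
    Integrable (fun x : ℝ => x) (gaussianReal m v) := by
  by_cases hv : v = 0
  · subst hv
    rw [gaussianReal_zero_var]
    refine ⟨aestronglyMeasurable_id, ?_⟩
    simp [HasFiniteIntegral, lintegral_dirac]
  · rw [gaussianReal_of_var_ne_zero m hv]
    have hpm : AEMeasurable (fun x => Real.toNNReal (gaussianPDFReal m v x)) volume :=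
      (measurable_real_toNNReal.comp (measurable_gaussianPDFReal m v)).aemeasurable
    have hd : gaussianPDF m v
        = fun x => ((Real.toNNReal (gaussianPDFReal m v x) : ℝ≥0) : ℝ≥0∞) := rfl
    rw [hd, integrable_withDensity_iff_integrable_smul₀ hpm]
    refine (integrable_gaussianPDFReal_mul_id m v).congr ?_
    filter_upwards with x
    rw [NNReal.smul_def, smul_eq_mul, Real.coe_toNNReal _ (gaussianPDFReal_nonneg m v x)]

lemma integral_id_gaussianReal (m : ℝ) (v : ℝ≥0) :
    ∫ x, x ∂(gaussianReal m v) = m := by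
  by_cases hv : v = 0
  · subst hv
    rw [gaussianReal_zero_var, integral_dirac]
  · rw [integral_gaussianReal_transfer m hv (fun x => x)]
    have h1 : (fun x => stdPDF x * (Real.sqrt v * x + m))
        = fun x => Real.sqrt v * (x * stdPDF x) + m * stdPDF x := by
      funext x; ring
    rw [h1, integral_add (integrable_mul_stdPDF.const_mul _) (integrable_stdPDF.const_mul _),
      integral_const_mul, integral_const_mul, integral_mul_stdPDF, integral_stdPDF]
    ring


lemma integral_max_gaussianReal (m : ℝ) {v : ℝ≥0} (hv : v ≠ 0) :
    ∫ x, max x 0 ∂(gaussianReal m v)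
      = m * stdCDF (m / Real.sqrt v) + Real.sqrt v * stdPDF (m / Real.sqrt v) := by
  have hv' : (0:ℝ) < (v:ℝ) := by exact_mod_cast (zero_lt_iff.mpr hv : (0:ℝ≥0) < v)
  set s : ℝ := Real.sqrt v with hs_def
  have hs : 0 < s := Real.sqrt_pos.mpr hv'
  rw [integral_gaussianReal_transfer m hv (fun x => max x 0)]
  set a : ℝ := -(m / s) with ha_def
  have hsa : s * a = -m := by rw [ha_def]; field_simp
  have hind : (fun x => stdPDF x * max (s * x + m) 0)
      = Set.indicator (Ici a) (fun x => s * (x * stdPDF x) + m * stdPDF x) := by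
    funext x
    by_cases hx : a ≤ x
    · rw [Set.indicator_of_mem (Set.mem_Ici.mpr hx)]
      have h0 : 0 ≤ s * x + m := by
        have := mul_le_mul_of_nonneg_left hx hs.le
        rw [hsa] at this
        linarith
      rw [max_eq_left h0]
      ring
    · rw [Set.indicator_of_notMem (fun h => hx (Set.mem_Ici.mp h))]
      push_neg at hx
      have h0 : s * x + m ≤ 0 := by
        have := mul_le_mul_of_nonneg_left hx.le hs.le
        rw [hsa] at this
        linarith
      rw [max_eq_right h0, mul_zero]
  rw [hind, integral_indicator measurableSet_Ici]
  rw [integral_add ((integrable_mul_stdPDF.const_mul s).integrableOn)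
    ((integrable_stdPDF.const_mul m).integrableOn),
    integral_const_mul, integral_const_mul, integral_mul_stdPDF_Ici, integral_stdPDF_Ici]
  have ha1 : stdPDF a = stdPDF (m / s) := by rw [ha_def, stdPDF_even]
  have ha2 : 1 - stdCDF a = stdCDF (m / s) := by
    rw [ha_def, stdCDF_neg]; ring
  rw [ha1, ha2]
  ring

/-- Closed form for `E[max(U, V)]` for a bivariate Gaussian vector. -/
theorem expected_max_bivariate_gaussian
    {Ω : Type*} [MeasureSpace Ω] [IsProbabilityMeasure (ℙ : Measure Ω)]
    (U V : Ω → ℝ) (μx μo Kxx Koo Kxo : ℝ)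
    (hs : 0 < Kxx + Koo - 2 * Kxo)
    (hjoint : ∀ a b : ℝ,
      Measure.map (fun ω => a * U ω + b * V ω) ℙ =
        gaussianReal (a * μx + b * μo)
          (Real.toNNReal (a ^ 2 * Kxx + b ^ 2 * Koo + 2 * a * b * Kxo))) :
    (∫ ω, max (U ω) (V ω) ∂ℙ) =
      μx * stdCDF ((μx - μo) / Real.sqrt (Kxx + Koo - 2 * Kxo))
        + μo * stdCDF ((μo - μx) / Real.sqrt (Kxx + Koo - 2 * Kxo))
        + Real.sqrt (Kxx + Koo - 2 * Kxo)
            * stdPDF ((μx - μo) / Real.sqrt (Kxx + Koo - 2 * Kxo)) := by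
  set s : ℝ := Real.sqrt (Kxx + Koo - 2 * Kxo) with hsdef
  set v : ℝ≥0 := Real.toNNReal (Kxx + Koo - 2 * Kxo) with hvdef
  have hvne : v ≠ 0 := (Real.toNNReal_pos.mpr hs).ne'
  have hvcoe : (v:ℝ) = Kxx + Koo - 2 * Kxo := Real.coe_toNNReal _ hs.le
  have hsv : Real.sqrt v = s := by rw [hvcoe]
  have hspos : 0 < s := Real.sqrt_pos.mpr hs
  -- marginal / difference laws
  have hV : Measure.map V ℙ = gaussianReal μo (Real.toNNReal Koo) := by
    have h := hjoint 0 1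
    have e1 : (fun ω => (0:ℝ) * U ω + 1 * V ω) = V := by funext ω; ring
    have e2 : (0:ℝ) * μx + 1 * μo = μo := by ring
    have e3 : (0:ℝ) ^ 2 * Kxx + 1 ^ 2 * Koo + 2 * 0 * 1 * Kxo = Koo := by ring
    rw [e1, e2, e3] at h
    exact h
  have hD : Measure.map (fun ω => U ω - V ω) ℙ = gaussianReal (μx - μo) v := by
    have h := hjoint 1 (-1)
    have e1 : (fun ω => (1:ℝ) * U ω + (-1) * V ω) = fun ω => U ω - V ω := by funext ω; ring
    have e2 : (1:ℝ) * μx + (-1) * μo = μx - μo := by ring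
    have e3 : (1:ℝ) ^ 2 * Kxx + (-1) ^ 2 * Koo + 2 * 1 * (-1) * Kxo = Kxx + Koo - 2 * Kxo := by
      ring
    rw [e1, e2, e3] at h
    exact h
  have hmV : AEMeasurable V ℙ := by
    by_contra hc
    rw [Measure.map_of_not_aemeasurable hc] at hV
    exact (IsProbabilityMeasure.ne_zero (gaussianReal μo (Real.toNNReal Koo))) hV.symm
  have hmD : AEMeasurable (fun ω => U ω - V ω) ℙ := by
    by_contra hc
    rw [Measure.map_of_not_aemeasurable hc] at hD
    exact (IsProbabilityMeasure.ne_zero (gaussianReal (μx - μo) v)) hD.symm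
  have hIV : Integrable V ℙ := by
    have h0 : Integrable (fun x : ℝ => x) (Measure.map V ℙ) := by
      rw [hV]; exact integrable_id_gaussianReal _ _
    exact (integrable_map_measure aestronglyMeasurable_id hmV).mp h0
  have hID : Integrable (fun ω => U ω - V ω) ℙ := by
    have h0 : Integrable (fun x : ℝ => x) (Measure.map (fun ω => U ω - V ω) ℙ) := by
      rw [hD]; exact integrable_id_gaussianReal _ _
    exact (integrable_map_measure aestronglyMeasurable_id hmD).mp h0
  have hIM : Integrable (fun ω => max (U ω - V ω) 0) ℙ := by
    refine hID.mono ((hmD.max aemeasurable_const).aestronglyMeasurable) ?_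
    filter_upwards with ω
    simp only [Real.norm_eq_abs]
    rcases le_total (U ω - V ω) 0 with h | h
    · rw [max_eq_right h]
      simp [abs_nonneg]
    · rw [max_eq_left h]
  have hsplit : (fun ω => max (U ω) (V ω)) = fun ω => V ω + max (U ω - V ω) 0 := by
    funext ω
    rcases le_total (U ω) (V ω) with h | h
    · rw [max_eq_right h, max_eq_right (by linarith), add_zero]
    · rw [max_eq_left h, max_eq_left (by linarith)]; ring
  have hEV : ∫ ω, V ω ∂ℙ = μo := by
    have h := integral_map (f := fun x : ℝ => x) hmV aestronglyMeasurable_id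
    rw [hV, _root_.integral_id_gaussianReal] at h
    exact h.symm
  have hEM : ∫ ω, max (U ω - V ω) 0 ∂ℙ
      = (μx - μo) * stdCDF ((μx - μo) / s) + s * stdPDF ((μx - μo) / s) := by
    have h := integral_map (f := fun x : ℝ => max x 0) hmD
      (measurable_id.max measurable_const).aestronglyMeasurable
    rw [hD, integral_max_gaussianReal (μx - μo) hvne, hsv] at h
    exact h.symm
  have hcomb : (∫ ω, max (U ω) (V ω) ∂ℙ)
      = (∫ ω, V ω ∂ℙ) + ∫ ω, max (U ω - V ω) 0 ∂ℙ := by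
    rw [hsplit]
    exact integral_add hIV hIM
  rw [hcomb, hEV, hEM]
  have hneg : (μo - μx) / s = -((μx - μo) / s) := by ring
  rw [hneg, stdCDF_neg]
  ring
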